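/- Define the digraph 𝒯 on V(G) with an arc x → y iff there is an influencing walk for a path cover 𝒞 of (G, I, O) with exactly one segment from x to y. Then 𝒞 has a vicious circuit if and only if 𝒯 contains a directed cycle (equivalently, two distinct mutually reachable vertices). -/

import Mathlib

namespace OneWayFlow

variable {V : Type}

/-- A flow `(f, ≼)` on a geometry `(G, I, O)`: `f` maps `Oᶜ` into `Iᶜ` (encoded as a total
function whose values only matter on `Oᶜ`), `le` is a partial order on `V(G)`, and the flow
conditions (i)-(iii) hold. -/
structure Flow (G : SimpleGraph V) (I O : Set V) where
  f : V → V
  le : V → V → Prop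
  le_refl : ∀ x, le x x
  le_trans : ∀ x y z, le x y → le y z → le x z
  le_antisymm : ∀ x y, le x y → le y x → x = y
  f_notMem : ∀ x, x ∉ O → f x ∉ I
  adj : ∀ x, x ∉ O → G.Adj x (f x)
  le_f : ∀ x, x ∉ O → le x (f x)
  le_nbr : ∀ x, x ∉ O → ∀ y, G.Adj y (f x) → le x y

/-- A path cover of a geometry `(G, I, O)`, encoded by its successor function: the arcs of the
cover are exactly `x → succ x` for `x ∉ O`.  Every vertex lies on exactly one maximal directed
path of the resulting functional digraph; `succ_notMem` says vertices of `I` have in-degree `0`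
(paths meet `I` only at their initial point), totality of `succ` on `Oᶜ` together with
`acyclic` says paths meet `O` exactly at their final point. -/
structure PathCover (G : SimpleGraph V) (I O : Set V) where
  succ : V → V
  adj : ∀ x, x ∉ O → G.Adj x (succ x)
  inj : ∀ x, x ∉ O → ∀ y, y ∉ O → succ x = succ y → x = y
  succ_notMem : ∀ x, x ∉ O → succ x ∉ I
  acyclic : ∀ x, ¬ Relation.TransGen (fun a b => a ∉ O ∧ b = succ a) x x

/-- `x → y` is an arc of (some path of) the path cover `C`. -/
def PathCover.Arc {G : SimpleGraph V} {I O : Set V} (C : PathCover G I O) (x y : V) : Prop :=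
  x ∉ O ∧ y = C.succ x

/-- A single segment of an influencing walk for `C`: either an arc `x → f(x)` of `C`, or
`x → f(x) → y` where the edge `y·f(x)` of `G` is not covered by `C`. -/
def PathCover.Seg {G : SimpleGraph V} {I O : Set V} (C : PathCover G I O) (x y : V) : Prop :=
  C.Arc x y ∨ ∃ w, C.Arc x w ∧ G.Adj y w ∧ ¬ C.Arc y w ∧ ¬ C.Arc w y

/-- There is an influencing walk for `C` from `x` to `y` (a concatenation of zero or more
segments). -/
def PathCover.InflWalk {G : SimpleGraph V} {I O : Set V} (C : PathCover G I O) :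
    V → V → Prop :=
  Relation.ReflTransGen C.Seg

/-- `C` has a vicious circuit: a closed influencing walk with at least one segment. -/
def PathCover.Vicious {G : SimpleGraph V} {I O : Set V} (C : PathCover G I O) : Prop :=
  ∃ x, Relation.TransGen C.Seg x x

/-- The natural pre-order for the successor function of `C`: the reflexive-transitive closure
of the relations `x ≼ f(x)` (for `x ∉ O`) and `x ≼ y` whenever `y ~ f(x)`. -/
def PathCover.NatPre {G : SimpleGraph V} {I O : Set V} (C : PathCover G I O) :
    V → V → Prop :=
  Relation.ReflTransGen (fun x y => x ∉ O ∧ (y = C.succ x ∨ G.Adj y (C.succ x)))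

/-- A segment, as a list of vertices, for an arc relation `A` of a family of directed paths
in `G`: either `[x, y]` with `x → y` an arc, or `[x, z, y]` where `x → z` is an arc and
`y·z ∈ E(G)` is an edge not covered by the family. -/
def IsSegList (G : SimpleGraph V) (A : V → V → Prop) (l : List V) : Prop :=
  (∃ x y, l = [x, y] ∧ A x y) ∨
  (∃ x z y, l = [x, z, y] ∧ A x z ∧ G.Adj y z ∧ ¬ A y z ∧ ¬ A z y)

/-- Glue a list of segments into a single walk (consecutive segments share an endpoint,
so each later segment contributes its tail). -/
def joinSegs : List (List V) → List V
  | [] => []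
  | s :: r => s ++ r.flatMap List.tail

/-- `D` is a decomposition of the walk `W` into segments (for the arc relation `A`):
every member of `D` is a segment, consecutive segments are glued end-to-start, and the
concatenation of the segments is `W`. -/
def IsDecomp (G : SimpleGraph V) (A : V → V → Prop) (W : List V) (D : List (List V)) : Prop :=
  (∀ s ∈ D, IsSegList G A s) ∧ D.Chain' (fun s t => s.getLast? = t.head?) ∧ joinSegs D = W

/-- `C` has a vicious circuit in the walk sense: a closed walk (same first and last vertex)
decomposing into at least one segment. -/
def PathCover.ViciousList {G : SimpleGraph V} {I O : Set V} (C : PathCover G I O) : Prop :=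
  ∃ (W : List V) (D : List (List V)), D ≠ [] ∧ IsDecomp G C.Arc W D ∧ W.head? = W.getLast?

/-- Extract the one-step segment relation from a segment list. -/
lemma seg_of_segList {G : SimpleGraph V} {I O : Set V} {C : PathCover G I O} {s : List V}
    (h : IsSegList G C.Arc s) :
    ∃ x y, s.head? = some x ∧ s.getLast? = some y ∧ C.Seg x y := by
  rcases h with ⟨x, y, rfl, h⟩ | ⟨x, z, y, rfl, h1, h2, h3, h4⟩
  · exact ⟨x, y, rfl, by simp, Or.inl h⟩
  · exact ⟨x, y, rfl, by simp, Or.inr ⟨z, h1, h2, h3, h4⟩⟩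

lemma segList_tail_ne_nil {G : SimpleGraph V} {A : V → V → Prop} {s : List V}
    (h : IsSegList G A s) : s.tail ≠ [] := by
  rcases h with ⟨x, y, rfl, -⟩ | ⟨x, z, y, rfl, -⟩ <;> simp

lemma segList_ne_nil {G : SimpleGraph V} {A : V → V → Prop} {s : List V}
    (h : IsSegList G A s) : s ≠ [] := by
  rcases h with ⟨x, y, rfl, -⟩ | ⟨x, z, y, rfl, -⟩ <;> simp

lemma joinSegs_head? {s : List V} {r : List (List V)} (hs : s ≠ []) :
    (joinSegs (s :: r)).head? = s.head? := by
  simp only [joinSegs]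
  exact List.head?_append_of_ne_nil _ hs

lemma joinSegs_getLast? : ∀ (D : List (List V)) (t : List V),
    (∀ s ∈ D, s.tail ≠ []) → D.getLast? = some t →
    (joinSegs D).getLast? = t.getLast?
  | [], t, _, ht => by simp at ht
  | [s], t, _, ht => by
      simp only [List.getLast?_singleton, Option.some.injEq] at ht
      subst ht; simp [joinSegs]
  | s :: u :: r, t, h, ht => by
      have hu : u.tail ≠ [] := h u (by simp)
      have ih := joinSegs_getLast? (u :: r) t
        (fun x hx => h x (List.mem_cons_of_mem _ hx)) (by simpa using ht)
      have hu' : u ≠ [] := by intro hnil; simp [hnil] at hu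
      obtain ⟨a, u', rfl⟩ : ∃ a u', u = a :: u' := by
        cases u with | nil => exact absurd rfl hu' | cons a u' => exact ⟨a, u', rfl⟩
      have hY : u' ++ r.flatMap List.tail ≠ [] := by
        intro hnil
        rcases List.append_eq_nil_iff.mp hnil with ⟨h1, -⟩
        simp [h1] at hu
      have e1 : joinSegs (s :: (a :: u') :: r) = s ++ (u' ++ r.flatMap List.tail) := by
        simp [joinSegs]
      have e2 : joinSegs ((a :: u') :: r) = a :: (u' ++ r.flatMap List.tail) := by
        simp [joinSegs]
      obtain ⟨c, Y', hYc⟩ : ∃ c Y', u' ++ r.flatMap List.tail = c :: Y' := by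
        cases hY2 : u' ++ r.flatMap List.tail with
        | nil => exact absurd hY2 hY
        | cons c Y' => exact ⟨c, Y', rfl⟩
      rw [e1, List.getLast?_append_of_ne_nil _ hY]
      rw [e2, hYc, List.getLast?_cons_cons] at ih
      rw [hYc]; exact ih

lemma transGen_of_decomp {G : SimpleGraph V} {I O : Set V} {C : PathCover G I O} :
    ∀ (D : List (List V)), D ≠ [] →
    (∀ s ∈ D, IsSegList G C.Arc s) →
    D.Chain' (fun s t => s.getLast? = t.head?) →
    ∃ a b, D.head?.bind List.head? = some a ∧ D.getLast?.bind List.getLast? = some b ∧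
      Relation.TransGen C.Seg a b
  | [], h, _, _ => absurd rfl h
  | [s], _, hseg, _ => by
      obtain ⟨x, y, hx, hy, hxy⟩ := seg_of_segList (hseg s (by simp))
      exact ⟨x, y, by simp [hx], by simp [hy], Relation.TransGen.single hxy⟩
  | s :: u :: r, _, hseg, hch => by
      obtain ⟨a', b', ha', hb', htg⟩ := transGen_of_decomp (u :: r) (by simp)
        (fun t ht => hseg t (List.mem_cons_of_mem _ ht)) hch.tail
      obtain ⟨x, y, hx, hy, hxy⟩ := seg_of_segList (hseg s (by simp))
      have hglue : s.getLast? = u.head? := (List.isChain_cons_cons.mp hch).1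
      have hya : y = a' := by
        have hu : u.head? = some a' := by simpa using ha'
        rw [hy, hu] at hglue
        exact Option.some.inj hglue
      refine ⟨x, b', by simp [hx], by simpa using hb', ?_⟩
      exact Relation.TransGen.head (hya ▸ hxy) htg

lemma segList_of_seg {G : SimpleGraph V} {I O : Set V} {C : PathCover G I O} {a b : V}
    (h : C.Seg a b) :
    ∃ s : List V, IsSegList G C.Arc s ∧ s.head? = some a ∧ s.getLast? = some b := by
  rcases h with h | ⟨w, h1, h2, h3, h4⟩
  · exact ⟨[a, b], Or.inl ⟨a, b, rfl, h⟩, rfl, by simp⟩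
  · exact ⟨[a, w, b], Or.inr ⟨a, w, b, rfl, h1, h2, h3, h4⟩, rfl, by simp⟩

lemma decomp_of_transGen {G : SimpleGraph V} {I O : Set V} {C : PathCover G I O} {a b : V}
    (h : Relation.TransGen C.Seg a b) :
    ∃ D : List (List V), D ≠ [] ∧ (∀ s ∈ D, IsSegList G C.Arc s) ∧
      D.Chain' (fun s t => s.getLast? = t.head?) ∧
      D.head?.bind List.head? = some a ∧ D.getLast?.bind List.getLast? = some b := by
  induction h with
  | single hab =>
      obtain ⟨s, hs, h1, h2⟩ := segList_of_seg hab
      exact ⟨[s], by simp, by simpa using hs, List.isChain_singleton _, by simp [h1], by simp [h2]⟩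
  | @tail b c hab hbc ih =>
      obtain ⟨D, hne, hseg, hch, hhd, hlast⟩ := ih
      obtain ⟨s, hs, h1, h2⟩ := segList_of_seg hbc
      obtain ⟨t, ht, htb⟩ : ∃ t, D.getLast? = some t ∧ t.getLast? = some b := by
        cases hD : D.getLast? with
        | none => simp [hD] at hlast
        | some t => exact ⟨t, rfl, by simpa [hD] using hlast⟩
      refine ⟨D ++ [s], by simp, ?_, ?_, ?_, ?_⟩
      · intro u hu
        rcases List.mem_append.mp hu with hu | hu
        · exact hseg u hu
        · simp at hu; subst hu; exact hs
      · refine List.isChain_append.mpr ⟨hch, by simp, ?_⟩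
        intro x hx y hy
        simp at hy
        rw [ht] at hx; simp at hx; subst hx; subst hy
        rw [htb, h1]
      · rw [List.head?_append_of_ne_nil _ hne]; exact hhd
      · simp [h2]

lemma seg_irrefl {G : SimpleGraph V} {I O : Set V} (C : PathCover G I O) (x : V) :
    ¬ C.Seg x x := by
  rintro (⟨hxO, hx⟩ | ⟨w, haw, hadj, hnaw, -⟩)
  · exact C.acyclic x (Relation.TransGen.single ⟨hxO, hx⟩)
  · exact hnaw haw

/-- Let `𝒯` be the digraph on `V(G)` with an arc `x → y` iff there is an
influencing walk for the path cover `𝒞` with exactly one segment from `x` to `y` (the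
relation `C.Seg`).  Then `𝒞` has a vicious circuit iff `𝒯` contains a directed cycle,
equivalently iff `𝒯` has two distinct mutually reachable vertices. -/
theorem vicious_iff_digraph_cycle [Fintype V] (G : SimpleGraph V) (I O : Set V)
    (C : PathCover G I O) :
    (C.ViciousList ↔ ∃ x, Relation.TransGen C.Seg x x) ∧
    (C.ViciousList ↔ ∃ x y, x ≠ y ∧
      Relation.ReflTransGen C.Seg x y ∧ Relation.ReflTransGen C.Seg y x) := by
  have key : C.ViciousList ↔ ∃ x, Relation.TransGen C.Seg x x := by
    constructor
    · rintro ⟨W, D, hne, ⟨hseg, hch, hW⟩, hclosed⟩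
      obtain ⟨a, b, ha, hb, htg⟩ := transGen_of_decomp D hne hseg hch
      obtain ⟨s, r, rfl⟩ : ∃ s r, D = s :: r := by
        cases D with | nil => exact absurd rfl hne | cons s r => exact ⟨s, r, rfl⟩
      have hsne : s ≠ [] := segList_ne_nil (hseg s (by simp))
      have hWh : W.head? = some a := by
        rw [← hW, joinSegs_head? hsne]; simpa using ha
      obtain ⟨t, ht, htl⟩ : ∃ t, (s :: r).getLast? = some t ∧ t.getLast? = some b := by
        cases hD : (s :: r).getLast? with
        | none => simp [hD] at hb
        | some t => exact ⟨t, rfl, by simpa [hD] using hb⟩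
      have hWl : W.getLast? = some b := by
        rw [← hW, joinSegs_getLast? (s :: r) t
          (fun u hu => segList_tail_ne_nil (hseg u hu)) ht]
        exact htl
      have hab : a = b := by
        rw [hWh, hWl] at hclosed; exact Option.some.inj hclosed
      exact ⟨a, hab ▸ htg⟩
    · rintro ⟨x, htg⟩
      obtain ⟨D, hne, hseg, hch, hhd, hlast⟩ := decomp_of_transGen htg
      refine ⟨joinSegs D, D, hne, ⟨hseg, hch, rfl⟩, ?_⟩
      obtain ⟨s, r, rfl⟩ : ∃ s r, D = s :: r := by
        cases D with | nil => exact absurd rfl hne | cons s r => exact ⟨s, r, rfl⟩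
      have hsne : s ≠ [] := segList_ne_nil (hseg s (by simp))
      obtain ⟨t, ht, htl⟩ : ∃ t, (s :: r).getLast? = some t ∧ t.getLast? = some x := by
        cases hD : (s :: r).getLast? with
        | none => simp [hD] at hlast
        | some t => exact ⟨t, rfl, by simpa [hD] using hlast⟩
      rw [joinSegs_head? hsne, joinSegs_getLast? (s :: r) t
        (fun u hu => segList_tail_ne_nil (hseg u hu)) ht, htl]
      simpa using hhd
  refine ⟨key, key.trans ?_⟩
  constructor
  · rintro ⟨x, htg⟩
    rcases Relation.TransGen.head'_iff.mp htg with ⟨c, hxc, hcx⟩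
    have hnex : x ≠ c := by rintro rfl; exact seg_irrefl C x hxc
    exact ⟨x, c, hnex, Relation.ReflTransGen.single hxc, hcx⟩
  · rintro ⟨x, y, hne, hxy, hyx⟩
    have h1 : Relation.TransGen C.Seg x y := by
      rcases Relation.ReflTransGen.cases_head hxy with rfl | ⟨c, hxc, hcy⟩
      · exact absurd rfl hne
      · exact Relation.TransGen.head' hxc hcy
    exact ⟨x, Relation.TransGen.trans_left h1 hyx⟩


end OneWayFlow
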